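/- arXiv:1211.2250 — 2 statements merged into one kernel-verified Lean document; each statement's English description precedes it below -/
import Mathlib

section
/- If Λ ⊆ ℝ^d is uniformly discrete and there exists a finite set F ⊆ ℝ^d with Λ − Λ ⊆ Λ + F, then Λ − Λ is uniformly discrete. -/
open Pointwise

def UnifDiscrete {d : ℕ} (S : Set (EuclideanSpace ℝ (Fin d))) : Prop :=
  ∃ r > 0, ∀ x ∈ S, ∀ y ∈ S, x ≠ y → r ≤ dist x y

theorem stmt2 {d : ℕ} (Λ F : Set (EuclideanSpace ℝ (Fin d)))
    (hΛ : UnifDiscrete Λ) (hF : F.Finite) (h : Λ - Λ ⊆ Λ + F) :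
    UnifDiscrete (Λ - Λ) := by
  obtain ⟨r, hr, hsep⟩ := hΛ
  set G : Set (EuclideanSpace ℝ (Fin d)) := F + (F - F) with hG
  have hGfin : G.Finite := hF.add (hF.sub hF)
  have key : ∀ x ∈ Λ - Λ, ∀ y ∈ Λ - Λ, x - y ∈ Λ + G := by
    intro x hx y hy
    obtain ⟨a, ha, f, hf, rfl⟩ := Set.mem_add.mp (h hx)
    obtain ⟨b, hb, g, hg, rfl⟩ := Set.mem_add.mp (h hy)
    have hab : a - b ∈ Λ - Λ := Set.mem_sub.mpr ⟨a, ha, b, hb, rfl⟩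
    obtain ⟨c, hc, e, he, hce⟩ := Set.mem_add.mp (h hab)
    refine Set.mem_add.mpr ⟨c, hc, e + (f - g),
      Set.mem_add.mpr ⟨e, he, f - g, Set.mem_sub.mpr ⟨f, hf, g, hg, rfl⟩, rfl⟩, ?_⟩
    have h1 : a + f - (b + g) = (a - b) + (f - g) := by abel
    rw [← hce] at h1
    rw [h1]; abel
  set S : Set (EuclideanSpace ℝ (Fin d)) :=
    (Λ + G) ∩ Metric.closedBall 0 (r/3) with hS
  have hSfin : S.Finite := by
    have hsub : S ⊆ ⋃ g ∈ G, ((fun a => a + g) '' (Λ ∩ Metric.closedBall (-g) (r/3))) := by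
      rintro z ⟨hz1, hz2⟩
      obtain ⟨a, ha, g, hg, rfl⟩ := Set.mem_add.mp hz1
      refine Set.mem_biUnion hg ⟨a, ⟨ha, ?_⟩, rfl⟩
      have hd : dist (a + g) 0 ≤ r/3 := Metric.mem_closedBall.mp hz2
      rw [Metric.mem_closedBall]
      calc dist a (-g) = dist (a + g) 0 := by
            rw [dist_eq_norm, dist_eq_norm]; congr 1; abel
        _ ≤ r/3 := hd
    refine Set.Finite.subset (Set.Finite.biUnion hGfin fun g _ => ?_) hsub
    refine Set.Finite.image _ (Set.Subsingleton.finite ?_)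
    rintro a ⟨ha, ha'⟩ b ⟨hb, hb'⟩
    by_contra hne
    have hab := hsep a ha b hb hne
    have h1 : dist a b ≤ dist a (-g) + dist (-g) b := dist_triangle _ _ _
    rw [dist_comm (-g) b] at h1
    have ha'' := Metric.mem_closedBall.mp ha'
    have hb'' := Metric.mem_closedBall.mp hb'
    linarith
  set S' := S \ {0} with hS'
  have hS'fin : S'.Finite := hSfin.diff
  obtain ⟨δ, hδpos, hδ⟩ : ∃ δ > 0, ∀ s ∈ S', δ ≤ ‖s‖ := by
    rcases S'.eq_empty_or_nonempty with he | hne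
    · exact ⟨1, one_pos, by simp [he]⟩
    · obtain ⟨s₀, hs₀, hmin⟩ := Set.exists_min_image S' (fun s => ‖s‖) hS'fin hne
      refine ⟨‖s₀‖, ?_, hmin⟩
      have hs0 : s₀ ≠ 0 := fun h0 => hs₀.2 (by simp [h0])
      exact norm_pos_iff.mpr hs0
  refine ⟨min (r/3) δ, lt_min (by linarith) hδpos, ?_⟩
  intro x hx y hy hxy
  have hz := key x hx y hy
  have hz0 : x - y ≠ 0 := sub_ne_zero.mpr hxy
  rw [dist_eq_norm]
  by_cases hcase : ‖x - y‖ ≤ r/3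
  · have hmem : x - y ∈ S' := by
      refine ⟨⟨hz, ?_⟩, by simpa using hz0⟩
      rw [Metric.mem_closedBall, dist_zero_right]; exact hcase
    exact le_trans (min_le_right _ _) (hδ _ hmem)
  · exact le_trans (min_le_left _ _) (le_of_not_ge hcase)
end

section
/- For every real β in the ℤ-module (1/√5)·ℤ[φ] (i.e., β = (a + bφ)/√5 with a, b ∈ ℤ), the distance from βφ^n to the nearest integer tends to 0 as n → ∞, where φ = (1+√5)/2. -/
noncomputable def φ : ℝ := (1 + Real.sqrt 5) / 2

theorem stmt8 (β : ℝ) (h : ∃ a b : ℤ, β = (a + b * φ) / Real.sqrt 5) :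
    Filter.Tendsto (fun n : ℕ => |β * φ ^ n - round (β * φ ^ n)|)
      Filter.atTop (nhds 0) := by
  obtain ⟨a, b, rfl⟩ := h
  have hφ : φ = Real.goldenRatio := rfl
  set ψ : ℝ := Real.goldenConj with hψ
  have h5 : (0:ℝ) < Real.sqrt 5 := Real.sqrt_pos.mpr (by norm_num)
  have hs : Real.sqrt 5 < 3 := by
    rw [show (3:ℝ) = Real.sqrt 9 by rw [show (9:ℝ) = 3^2 by norm_num, Real.sqrt_sq]; norm_num]
    exact Real.sqrt_lt_sqrt (by norm_num) (by norm_num)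
  have hψabs : |ψ| < 1 := by
    rw [abs_lt]
    constructor <;> simp only [hψ, Real.goldenConj] <;> nlinarith
  -- key identity
  have key : ∀ n : ℕ, ((a + b * φ) / Real.sqrt 5) * φ ^ n
      - ((a * Nat.fib n + b * Nat.fib (n+1) : ℤ) : ℝ)
      = ((a + b * ψ) / Real.sqrt 5) * ψ ^ n := by
    intro n
    have h1 := Real.coe_fib_eq n
    have h2 := Real.coe_fib_eq (n+1)
    rw [pow_succ, pow_succ] at h2
    push_cast
    rw [h1, h2, hφ]
    set u := Real.goldenRatio ^ n
    set v := Real.goldenConj ^ n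
    field_simp
    ring
  have hbound : ∀ n : ℕ,
      |((a + b * φ) / Real.sqrt 5) * φ ^ n - round (((a + b * φ) / Real.sqrt 5) * φ ^ n)|
      ≤ |(a + b * ψ) / Real.sqrt 5| * |ψ| ^ n := by
    intro n
    calc |((a + b * φ) / Real.sqrt 5) * φ ^ n - round (((a + b * φ) / Real.sqrt 5) * φ ^ n)|
        ≤ |((a + b * φ) / Real.sqrt 5) * φ ^ n - ((a * Nat.fib n + b * Nat.fib (n+1) : ℤ) : ℝ)| :=
          round_le _ _
      _ = |((a + b * ψ) / Real.sqrt 5) * ψ ^ n| := by rw [key n]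
      _ = |(a + b * ψ) / Real.sqrt 5| * |ψ| ^ n := by rw [abs_mul, abs_pow]
  have hlim : Filter.Tendsto (fun n : ℕ => |(a + b * ψ) / Real.sqrt 5| * |ψ| ^ n)
      Filter.atTop (nhds 0) := by
    rw [show (0:ℝ) = |(a + b * ψ) / Real.sqrt 5| * 0 by ring]
    exact (tendsto_pow_atTop_nhds_zero_of_lt_one (abs_nonneg _) hψabs).const_mul _
  exact squeeze_zero (fun n => abs_nonneg _) hbound hlim
end
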